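/- arXiv:1503.04169 — 3 statements merged into one kernel-verified Lean document; each statement's English description precedes it below -/
import Mathlib

section
/- For any join query Q with hypergraph H = (V, E), for any fractional edge cover x = (x_F)_{F∈E} of H, the number of tuples in the join ⋈_{F∈E} R_F is at most ∏_{F∈E} |R_F|^{x_F}. -/
open MeasureTheory Finset in
lemma holder_sum_one {ι κ : Type} [Fintype κ] (s : Finset ι) (a : ι → κ → ENNReal) (p : ι → ℝ)
    (hp0 : ∀ i ∈ s, 0 ≤ p i) (hp : ∑ i ∈ s, p i = 1) :
    ∑ d : κ, ∏ i ∈ s, a i d ^ p i ≤ ∏ i ∈ s, (∑ d : κ, a i d) ^ p i := by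
  letI : MeasurableSpace κ := ⊤
  have H := ENNReal.lintegral_prod_norm_pow_le (μ := Measure.count) s
    (f := fun i d => a i d) (fun i _ => measurable_from_top.aemeasurable) hp hp0
  rw [lintegral_count' measurable_from_top, tsum_fintype] at H
  refine H.trans (Finset.prod_le_prod (fun _ _ => zero_le) (fun i hi => ?_))
  rw [lintegral_count' measurable_from_top, tsum_fintype]


lemma sum_rpow_le_rpow_sum' {κ : Type} (t : Finset κ) (b : κ → ENNReal)
    (hb : ∀ d ∈ t, b d ≠ ⊤) {X : ℝ} (hX : 1 ≤ X) :
    ∑ d ∈ t, b d ^ X ≤ (∑ d ∈ t, b d) ^ X := by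
  set S := ∑ d ∈ t, b d with hS
  have hXeq : X = 1 + (X - 1) := by ring
  rcases eq_or_ne S 0 with h0 | h0
  · have hb0 : ∀ d ∈ t, b d = 0 := by
      have := h0; rw [hS, Finset.sum_eq_zero_iff] at this; exact this
    rw [h0, ENNReal.zero_rpow_of_pos (by linarith)]
    rw [Finset.sum_eq_zero]
    intro d hd
    rw [hb0 d hd, ENNReal.zero_rpow_of_pos (by linarith)]
  · have hStop : S ≠ ⊤ :=
      (ENNReal.sum_lt_top.mpr (fun d hd => lt_top_iff_ne_top.mpr (hb d hd))).ne
    have key : ∀ d ∈ t, b d ^ X ≤ b d * S ^ (X - 1) := by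
      intro d hd
      rcases eq_or_ne (b d) 0 with h | h
      · rw [h, ENNReal.zero_rpow_of_pos (by linarith), zero_mul]
      · calc b d ^ X = b d * b d ^ (X - 1) := by
              rw [hXeq, ENNReal.rpow_add _ _ h (hb d hd), ENNReal.rpow_one]; ring_nf
          _ ≤ b d * S ^ (X - 1) := mul_le_mul' le_rfl (ENNReal.rpow_le_rpow
              (Finset.single_le_sum (fun _ _ => zero_le) hd) (by linarith))
    calc ∑ d ∈ t, b d ^ X ≤ ∑ d ∈ t, b d * S ^ (X - 1) := Finset.sum_le_sum key
      _ = S * S ^ (X - 1) := by rw [← Finset.sum_mul]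
      _ = S ^ X := by rw [hXeq, ENNReal.rpow_add _ _ h0 hStop, ENNReal.rpow_one]; rw [← hXeq]



lemma holder_ge_one {ι κ : Type} [Fintype κ] (s : Finset ι) (a : ι → κ → ENNReal)
    (ha : ∀ i ∈ s, ∀ d, a i d ≠ ⊤) (p : ι → ℝ)
    (hp0 : ∀ i ∈ s, 0 ≤ p i) (hp : 1 ≤ ∑ i ∈ s, p i) :
    ∑ d : κ, ∏ i ∈ s, a i d ^ p i ≤ ∏ i ∈ s, (∑ d : κ, a i d) ^ p i := by
  set X := ∑ i ∈ s, p i with hX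
  have hXpos : 0 < X := lt_of_lt_of_le one_pos hp
  set q := fun i => p i / X with hq
  have hq0 : ∀ i ∈ s, 0 ≤ q i := fun i hi => div_nonneg (hp0 i hi) hXpos.le
  have hq1 : ∑ i ∈ s, q i = 1 := by
    rw [hq, ← Finset.sum_div, ← hX, div_self hXpos.ne']
  have hqi : ∀ i, q i * X = p i := fun i => by
    rw [hq]; field_simp
  calc ∑ d : κ, ∏ i ∈ s, a i d ^ p i
      = ∑ d : κ, (∏ i ∈ s, a i d ^ q i) ^ X := by
        apply Finset.sum_congr rfl
        intro d _
        rw [← ENNReal.prod_rpow_of_nonneg hXpos.le]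
        apply Finset.prod_congr rfl
        intro i hi
        rw [← ENNReal.rpow_mul, hqi]
    _ ≤ (∑ d : κ, ∏ i ∈ s, a i d ^ q i) ^ X := by
        apply sum_rpow_le_rpow_sum' _ _ _ hp
        intro d _
        exact (ENNReal.prod_lt_top (fun i hi => (ENNReal.rpow_lt_top_of_nonneg (hq0 i hi)
          (ha i hi d)))).ne
    _ ≤ (∏ i ∈ s, (∑ d : κ, a i d) ^ q i) ^ X := by
        exact ENNReal.rpow_le_rpow (holder_sum_one s a q hq0 hq1) hXpos.le
    _ = ∏ i ∈ s, (∑ d : κ, a i d) ^ p i := by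
        rw [← ENNReal.prod_rpow_of_nonneg hXpos.le]
        exact Finset.prod_congr rfl fun i hi => by rw [← ENNReal.rpow_mul, hqi]



lemma card_filter_eq_of_iff {α : Type} [Fintype α] {p q : α → Prop}
    (hp : DecidablePred p) (hq : DecidablePred q) (h : ∀ a, p a ↔ q a) :
    (@Finset.filter _ p hp Finset.univ).card = (@Finset.filter _ q hq Finset.univ).card := by
  congr 1
  ext a
  simp only [Finset.mem_filter, Finset.mem_univ, true_and]
  exact h a

variable {V D : Type} [Fintype V] [DecidableEq V] [Fintype D] [DecidableEq D]

/-- Standardize a tuple: keep coordinates in `G`, set the rest to the default `d0`. -/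
def stdz (d0 : V → D) (G : Finset V) (t : V → D) : V → D := fun u => if u ∈ G then t u else d0 u

lemma sum_slices_le (d0 : V → D) (v : V) (G : Finset V) (hvG : v ∈ G) (A : Finset (V → D)) :
    ∑ d : D, ((Finset.univ.filter fun t => Function.update t v d ∈ A).image
       (stdz d0 (G.erase v))).card
      ≤ (A.image (stdz d0 G)).card := by
  set B := fun d : D => ((Finset.univ.filter fun t => Function.update t v d ∈ A).image
       (stdz d0 (G.erase v))) with hB
  have hmemv : ∀ d : D, ∀ r ∈ B d, r v = d0 v := by
    intro d r hr
    obtain ⟨t, _, rfl⟩ := Finset.mem_image.mp hr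
    simp [stdz, Finset.mem_erase]
  have hcardim : ∀ d : D, ((B d).image (fun r => Function.update r v d)).card = (B d).card := by
    intro d
    apply Finset.card_image_of_injOn
    intro r₁ h₁ r₂ h₂ heq
    funext u
    rcases eq_or_ne u v with rfl | hne
    · rw [hmemv d r₁ h₁, hmemv d r₂ h₂]
    · have := congrFun heq u
      simpa [Function.update_of_ne hne] using this
  calc ∑ d : D, (B d).card
      = ∑ d : D, ((B d).image (fun r => Function.update r v d)).card := by
        exact (Finset.sum_congr rfl fun d _ => (hcardim d).symm)
    _ = (Finset.univ.biUnion (fun d => (B d).image (fun r => Function.update r v d))).card := by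
        refine (Finset.card_biUnion ?_).symm
        intro d₁ _ d₂ _ hne
        rw [Function.onFun, Finset.disjoint_left]
        intro r h₁ h₂
        obtain ⟨r₁, _, rfl⟩ := Finset.mem_image.mp h₁
        obtain ⟨r₂, _, heq⟩ := Finset.mem_image.mp h₂
        apply hne
        have := congrFun heq v
        simpa [Function.update_self] using this.symm
    _ ≤ (A.image (stdz d0 G)).card := by
        apply Finset.card_le_card
        intro r hr
        obtain ⟨d, -, hr⟩ := Finset.mem_biUnion.mp hr
        obtain ⟨r', hr', rfl⟩ := Finset.mem_image.mp hr
        obtain ⟨t, ht, rfl⟩ := Finset.mem_image.mp hr'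
        rw [Finset.mem_filter] at ht
        refine Finset.mem_image.mpr ⟨Function.update t v d, ht.2, ?_⟩
        funext u
        rcases eq_or_ne u v with rfl | hne
        · simp [stdz, hvG, Function.update_self]
        · rw [Function.update_of_ne hne]
          simp [stdz, hne, Function.update_of_ne hne, Finset.mem_erase]

lemma agm_aux {ι : Type} (s : Finset ι) (x : ι → ℝ) (hx0 : ∀ i ∈ s, 0 ≤ x i)
    (d0 : V → D) (W : Finset V) :
    ∀ (Fi : ι → Finset V) (A : ι → Finset (V → D)),
    (∀ i ∈ s, Fi i ⊆ W) →
    (∀ i ∈ s, ∀ t ∈ A i, ∀ t' : V → D, (∀ u ∈ Fi i, t' u = t u) → t' ∈ A i) →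
    (∀ u ∈ W, 1 ≤ ∑ i ∈ s.filter (fun i => u ∈ Fi i), x i) →
    ((Finset.univ.filter
        (fun t : V → D => (∀ i ∈ s, t ∈ A i) ∧ ∀ u, u ∉ W → t u = d0 u)).card : ENNReal)
      ≤ ∏ i ∈ s, (((A i).image (stdz d0 (Fi i))).card : ENNReal) ^ x i := by
  induction W using Finset.strongInduction with
  | _ W IH =>
  intro Fi A hsub hsupp hcov
  rcases W.eq_empty_or_nonempty with rfl | ⟨v, hv⟩
  · -- base case : W = ∅
    have hsub1 : (Finset.univ.filter
        (fun t : V → D => (∀ i ∈ s, t ∈ A i) ∧ ∀ u, u ∉ (∅ : Finset V) → t u = d0 u)) ⊆ {d0} := by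
      intro t ht
      rw [Finset.mem_filter] at ht
      have : t = d0 := funext fun u => ht.2.2 u (Finset.notMem_empty u)
      simp [this]
    rcases Finset.eq_empty_or_nonempty (Finset.univ.filter
        (fun t : V → D => (∀ i ∈ s, t ∈ A i) ∧ ∀ u, u ∉ (∅ : Finset V) → t u = d0 u))
      with he | ⟨t, ht⟩
    · rw [he]; simp
    · have h1 : (Finset.univ.filter
        (fun t : V → D => (∀ i ∈ s, t ∈ A i) ∧ ∀ u, u ∉ (∅ : Finset V) → t u = d0 u)).card ≤ 1 :=
        le_trans (Finset.card_le_card hsub1) (by simp)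
      refine le_trans (show ((Finset.univ.filter _).card : ENNReal) ≤ 1 by exact_mod_cast h1)
        (Finset.one_le_prod' ?_)
      intro i hi
      have htA : t ∈ A i := (Finset.mem_filter.mp ht).2.1 i hi
      have himg : (1 : ENNReal) ≤ ((A i).image (stdz d0 (Fi i))).card := by
        have : 0 < ((A i).image (stdz d0 (Fi i))).card :=
          Finset.card_pos.mpr ⟨stdz d0 (Fi i) t, Finset.mem_image_of_mem _ htA⟩
        exact_mod_cast this
      calc (1 : ENNReal) = 1 ^ x i := (ENNReal.one_rpow _).symm
        _ ≤ _ := ENNReal.rpow_le_rpow himg (hx0 i hi)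
  · -- inductive step : v ∈ W
    set W' := W.erase v with hW'
    set Fi' := fun i => (Fi i).erase v with hFi'
    set Ad := fun (d : D) (i : ι) =>
      (Finset.univ.filter fun t : V → D => Function.update t v d ∈ A i) with hAd
    -- IH applied to each slice
    have hIH : ∀ d : D,
        ((Finset.univ.filter
            (fun t : V → D => (∀ i ∈ s, t ∈ Ad d i) ∧ ∀ u, u ∉ W' → t u = d0 u)).card : ENNReal)
          ≤ ∏ i ∈ s, (((Ad d i).image (stdz d0 (Fi' i))).card : ENNReal) ^ x i := by
      intro d
      apply IH W' (Finset.erase_ssubset hv) Fi' (Ad d)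
      · intro i hi
        exact Finset.erase_subset_erase v (hsub i hi)
      · intro i hi t ht t' hagree
        simp only [hAd, Finset.mem_filter, Finset.mem_univ, true_and] at ht ⊢
        apply hsupp i hi _ ht
        intro u hu
        rcases eq_or_ne u v with rfl | hne
        · simp [Function.update_self]
        · rw [Function.update_of_ne hne, Function.update_of_ne hne]
          exact hagree u (Finset.mem_erase.mpr ⟨hne, hu⟩)
      · intro u hu
        obtain ⟨hune, huW⟩ := Finset.mem_erase.mp hu
        have hfe : s.filter (fun i => u ∈ Fi' i) = s.filter (fun i => u ∈ Fi i) := by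
          apply Finset.filter_congr
          intro i _
          simp [hFi', Finset.mem_erase, hune]
        rw [hfe]
        exact hcov u huW
    -- partition the count according to the value at v
    have hpart : (Finset.univ.filter
          (fun t : V → D => (∀ i ∈ s, t ∈ A i) ∧ ∀ u, u ∉ W → t u = d0 u)).card
        = ∑ d : D, (Finset.univ.filter
            (fun t : V → D => (∀ i ∈ s, t ∈ Ad d i) ∧ ∀ u, u ∉ W' → t u = d0 u)).card := by
      rw [Finset.card_eq_sum_card_fiberwise
        (f := fun t : V → D => t v) (t := Finset.univ) (fun t _ => Finset.mem_univ _)]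
      apply Finset.sum_congr rfl
      intro d _
      apply Finset.card_nbij' (fun t => Function.update t v (d0 v))
        (fun t => Function.update t v d)
      · -- maps forward
        intro t ht
        simp only [Finset.mem_coe, Finset.mem_filter, Finset.mem_univ, true_and] at ht ⊢
        obtain ⟨⟨hA1, hW1⟩, hval⟩ := ht
        constructor
        · intro i hi
          simp only [hAd, Finset.mem_filter, Finset.mem_univ, true_and]
          have : Function.update (Function.update t v (d0 v)) v d = t := by
            funext u
            rcases eq_or_ne u v with rfl | hne
            · rw [Function.update_self, hval]
            · rw [Function.update_of_ne hne, Function.update_of_ne hne]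
          rw [this]
          exact hA1 i hi
        · intro u hu
          rcases eq_or_ne u v with rfl | hne
          · rw [Function.update_self]
          · rw [Function.update_of_ne hne]
            apply hW1
            intro huW
            exact hu (Finset.mem_erase.mpr ⟨hne, huW⟩)
      · -- maps backward
        intro t ht
        simp only [Finset.mem_coe, Finset.mem_filter, Finset.mem_univ, true_and] at ht ⊢
        obtain ⟨hA1, hW1⟩ := ht
        refine ⟨⟨?_, ?_⟩, Function.update_self _ _ _⟩
        · intro i hi
          have := hA1 i hi
          simpa only [hAd, Finset.mem_filter, Finset.mem_univ, true_and] using this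
        · intro u hu
          have hne : u ≠ v := fun h => hu (h ▸ hv)
          rw [Function.update_of_ne hne]
          exact hW1 u (fun h => hu (Finset.mem_of_mem_erase h))
      · -- left inverse
        intro t ht
        simp only [Finset.mem_coe, Finset.mem_filter] at ht
        funext u; beta_reduce
        rcases eq_or_ne u v with rfl | hne
        · rw [Function.update_self, ht.2]
        · rw [Function.update_of_ne hne, Function.update_of_ne hne]
      · -- right inverse
        intro t ht
        simp only [Finset.mem_coe, Finset.mem_filter, Finset.mem_univ, true_and] at ht
        funext u; beta_reduce
        rcases eq_or_ne u v with rfl | hne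
        · rw [Function.update_self]
          exact (ht.2 u (Finset.notMem_erase u W)).symm
        · rw [Function.update_of_ne hne, Function.update_of_ne hne]
    -- for edges not containing v, the slice equals the original
    have hconst : ∀ d : D, ∀ i ∈ s, v ∉ Fi i →
        ((Ad d i).image (stdz d0 (Fi' i))) = ((A i).image (stdz d0 (Fi i))) := by
      intro d i hi hvi
      have h1 : Fi' i = Fi i := Finset.erase_eq_of_notMem hvi
      have h2 : Ad d i = A i := by
        ext t
        simp only [hAd, Finset.mem_filter, Finset.mem_univ, true_and]
        constructor
        · intro h
          apply hsupp i hi _ h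
          intro u hu
          have hne : u ≠ v := fun he => hvi (he ▸ hu)
          exact (Function.update_of_ne hne _ _).symm
        · intro h
          apply hsupp i hi t h
          intro u hu
          have hne : u ≠ v := fun he => hvi (he ▸ hu)
          exact Function.update_of_ne hne _ _
      rw [h1, h2]
    calc ((Finset.univ.filter
          (fun t : V → D => (∀ i ∈ s, t ∈ A i) ∧ ∀ u, u ∉ W → t u = d0 u)).card : ENNReal)
        = ∑ d : D, ((Finset.univ.filter
            (fun t : V → D => (∀ i ∈ s, t ∈ Ad d i) ∧ ∀ u, u ∉ W' → t u = d0 u)).card : ENNReal) := by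
          rw [hpart]; push_cast; rfl
      _ ≤ ∑ d : D, ∏ i ∈ s, (((Ad d i).image (stdz d0 (Fi' i))).card : ENNReal) ^ x i :=
          Finset.sum_le_sum (fun d _ => hIH d)
      _ = ∑ d : D, ((∏ i ∈ s.filter (fun i => v ∈ Fi i),
              (((Ad d i).image (stdz d0 (Fi' i))).card : ENNReal) ^ x i) *
            ∏ i ∈ s.filter (fun i => ¬ v ∈ Fi i),
              (((A i).image (stdz d0 (Fi i))).card : ENNReal) ^ x i) := by
          apply Finset.sum_congr rfl
          intro d _
          rw [← Finset.prod_filter_mul_prod_filter_not s (fun i => v ∈ Fi i)]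
          congr 1
          apply Finset.prod_congr rfl
          intro i hi
          rw [hconst d i (Finset.mem_filter.mp hi).1 (Finset.mem_filter.mp hi).2]
      _ = (∏ i ∈ s.filter (fun i => ¬ v ∈ Fi i),
              (((A i).image (stdz d0 (Fi i))).card : ENNReal) ^ x i) *
            ∑ d : D, ∏ i ∈ s.filter (fun i => v ∈ Fi i),
              (((Ad d i).image (stdz d0 (Fi' i))).card : ENNReal) ^ x i := by
          rw [Finset.mul_sum]
          apply Finset.sum_congr rfl
          intro d _
          ring
      _ ≤ (∏ i ∈ s.filter (fun i => ¬ v ∈ Fi i),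
              (((A i).image (stdz d0 (Fi i))).card : ENNReal) ^ x i) *
            ∏ i ∈ s.filter (fun i => v ∈ Fi i),
              (∑ d : D, (((Ad d i).image (stdz d0 (Fi' i))).card : ENNReal)) ^ x i := by
          apply mul_le_mul' le_rfl
          apply holder_ge_one
          · intro i _ d
            exact ENNReal.natCast_ne_top _
          · intro i hi
            exact hx0 i (Finset.mem_filter.mp hi).1
          · exact hcov v hv
      _ ≤ (∏ i ∈ s.filter (fun i => ¬ v ∈ Fi i),
              (((A i).image (stdz d0 (Fi i))).card : ENNReal) ^ x i) *
            ∏ i ∈ s.filter (fun i => v ∈ Fi i),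
              (((A i).image (stdz d0 (Fi i))).card : ENNReal) ^ x i := by
          apply mul_le_mul' le_rfl
          apply Finset.prod_le_prod'
          intro i hi
          obtain ⟨his, hvi⟩ := Finset.mem_filter.mp hi
          apply ENNReal.rpow_le_rpow _ (hx0 i his)
          have hs := sum_slices_le d0 v (Fi i) hvi (A i)
          calc ∑ d : D, (((Ad d i).image (stdz d0 (Fi' i))).card : ENNReal)
              = ((∑ d : D, ((Ad d i).image (stdz d0 (Fi' i))).card : ℕ) : ENNReal) := by
                push_cast; rfl
            _ ≤ _ := by exact_mod_cast hs
      _ = ∏ i ∈ s, (((A i).image (stdz d0 (Fi i))).card : ENNReal) ^ x i := by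
          rw [mul_comm, Finset.prod_filter_mul_prod_filter_not]

set_option maxHeartbeats 1000000 in
/-- **AGM inequality**: for any join query with hypergraph `(V, E)` and relations
`R F` (sets of tuples over the attribute set `F`), and any fractional edge cover
`x`, the size of the join is at most `∏_{F ∈ E} |R F| ^ (x F)`. -/
theorem agm_inequality {V D : Type} [Fintype V] [DecidableEq V] [Fintype D]
    (E : Finset (Finset V))
    (R : (F : Finset V) → Finset ({v // v ∈ F} → D))
    (x : Finset V → ℝ)
    (hx_nonneg : ∀ F, 0 ≤ x F)
    (hx_cover : ∀ v : V, 1 ≤ ∑ F ∈ E.filter (fun F => v ∈ F), x F) :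
    (Nat.card {t : V → D // ∀ F ∈ E, (fun v : {v // v ∈ F} => t v.1) ∈ R F} : ℝ)
      ≤ ∏ F ∈ E, ((R F).card : ℝ) ^ (x F) := by
  classical
  have hRHS0 : (0:ℝ) ≤ ∏ F ∈ E, ((R F).card : ℝ) ^ (x F) :=
    Finset.prod_nonneg fun F _ => Real.rpow_nonneg (Nat.cast_nonneg _) _
  rcases isEmpty_or_nonempty D with hD | hD
  · -- D is empty
    rcases isEmpty_or_nonempty V with hV | hV
    · -- V also empty : at most one tuple
      haveI : Subsingleton (V → D) := ⟨fun f g => funext fun v => (hV.false v).elim⟩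
      rcases isEmpty_or_nonempty {t : V → D // ∀ F ∈ E, (fun v : {v // v ∈ F} => t v.1) ∈ R F}
        with he | hne
      · rw [Nat.card_of_isEmpty]
        simpa using hRHS0
      · rw [Nat.card_unique]
        obtain ⟨t, ht⟩ := hne
        push_cast
        calc (1:ℝ) = ∏ F ∈ E, 1 := by simp
          _ ≤ ∏ F ∈ E, ((R F).card : ℝ) ^ (x F) := by
            apply Finset.prod_le_prod (fun _ _ => zero_le_one)
            intro F hF
            have hpos : 0 < (R F).card := Finset.card_pos.mpr ⟨_, ht F hF⟩
            have h1 : (1:ℝ) ≤ ((R F).card : ℝ) := by exact_mod_cast hpos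
            calc (1:ℝ) = 1 ^ x F := (Real.one_rpow _).symm
              _ ≤ ((R F).card : ℝ) ^ x F :=
                Real.rpow_le_rpow zero_le_one h1 (hx_nonneg F)
    · -- V nonempty, D empty : no tuples at all
      haveI : IsEmpty (V → D) := ⟨fun f => hD.false (f (Classical.arbitrary V))⟩
      haveI : IsEmpty {t : V → D // ∀ F ∈ E, (fun v : {v // v ∈ F} => t v.1) ∈ R F} :=
        ⟨fun t => (‹IsEmpty (V → D)›.false t.1)⟩
      rw [Nat.card_of_isEmpty]
      simpa using hRHS0
  · -- main case : D nonempty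
    set d0 : V → D := fun _ => Classical.arbitrary D with hd0
    set A : Finset V → Finset (V → D) :=
      fun F => Finset.univ.filter (fun t => (fun v : {v // v ∈ F} => t v.1) ∈ R F) with hA
    have key := agm_aux (ι := Finset V) E x (fun F _ => hx_nonneg F) d0 Finset.univ id A
      (fun F _ => Finset.subset_univ _)
      (by
        intro F hF t ht t' hagree
        simp only [hA, Finset.mem_filter, Finset.mem_univ, true_and, id_eq] at ht ⊢
        have : (fun v : {v // v ∈ F} => t' v.1) = (fun v : {v // v ∈ F} => t v.1) :=
          funext fun v => hagree v.1 v.2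
        rw [this]
        exact ht)
      (fun u _ => hx_cover u)
    -- the effective sizes are at most the sizes of the relations
    have hm : ∀ F ∈ E, ((A F).image (stdz d0 (id F))).card ≤ (R F).card := by
      intro F _
      apply Finset.card_le_card_of_injOn (fun r => (fun v : {v // v ∈ F} => r v.1))
      · intro r hr
        obtain ⟨t, ht, rfl⟩ := Finset.mem_image.mp hr
        simp only [hA, Finset.mem_filter, Finset.mem_univ, true_and] at ht
        have : (fun v : {v // v ∈ F} => stdz d0 (id F) t v.1)
            = (fun v : {v // v ∈ F} => t v.1) :=
          funext fun v => by simp [stdz, v.2]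
        show (fun v : {v // v ∈ F} => stdz d0 (id F) t v.1) ∈ R F; rw [this]
        exact ht
      · intro r₁ h₁ r₂ h₂ heq
        simp only [Finset.coe_image, Set.mem_image] at h₁ h₂
        obtain ⟨t₁, -, rfl⟩ := h₁
        obtain ⟨t₂, -, rfl⟩ := h₂
        funext u
        by_cases hu : u ∈ F
        · have := congrFun heq ⟨u, hu⟩
          simpa [stdz, hu] using this
        · simp [stdz, hu]
    have key2 : ((Nat.card {t : V → D // ∀ F ∈ E, (fun v : {v // v ∈ F} => t v.1) ∈ R F} : ℕ)
          : ENNReal) ≤ ∏ F ∈ E, ((R F).card : ENNReal) ^ x F := by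
      refine le_trans ?_ (key.trans (Finset.prod_le_prod' fun F hF =>
        ENNReal.rpow_le_rpow (by exact_mod_cast hm F hF) (hx_nonneg F)))
      norm_cast
      apply le_of_eq
      rw [Nat.card_eq_fintype_card, Fintype.card_subtype]
      exact card_filter_eq_of_iff _ _ (by simp [hA])
    have hfin : ∏ F ∈ E, ((R F).card : ENNReal) ^ x F ≠ ⊤ :=
      (ENNReal.prod_lt_top fun F _ =>
        ENNReal.rpow_lt_top_of_nonneg (hx_nonneg F) (ENNReal.natCast_ne_top _)).ne
    have hto := ENNReal.toReal_mono hfin key2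
    rw [ENNReal.toReal_natCast] at hto
    calc (Nat.card {t : V → D // ∀ F ∈ E, (fun v : {v // v ∈ F} => t v.1) ∈ R F} : ℝ)
        ≤ (∏ F ∈ E, ((R F).card : ENNReal) ^ x F).toReal := hto
      _ = ∏ F ∈ E, ((R F).card : ℝ) ^ (x F) := by
          rw [ENNReal.toReal_prod]
          exact Finset.prod_congr rfl fun F _ => by
            rw [← ENNReal.toReal_rpow, ENNReal.toReal_natCast]
end

section
/- For the triangle query Q = R(A,B) ⋈ S(B,C) ⋈ T(A,C) where |R|, |S|, |T| ≤ N, the output size is at most N^{3/2}. -/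
/-- For the triangle query `R(A,B) ⋈ S(B,C) ⋈ T(A,C)` with `|R|,|S|,|T| ≤ N`,
the output size is at most `N^(3/2)`. -/
theorem triangle_agm_bound {D : Type} (R S T : Finset (D × D)) (N : ℕ)
    (hR : R.card ≤ N) (hS : S.card ≤ N) (hT : T.card ≤ N) :
    ({p : D × D × D | (p.1, p.2.1) ∈ R ∧ (p.2.1, p.2.2) ∈ S ∧ (p.1, p.2.2) ∈ T}.ncard : ℝ)
      ≤ (N : ℝ) ^ ((3 : ℝ) / 2) := by
  classical
  set A : Finset D := R.image Prod.fst with hA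
  set B : Finset D := R.image Prod.snd with hB
  set C : Finset D := S.image Prod.snd with hC
  set Q : Finset (D × D × D) :=
    (A ×ˢ B ×ˢ C).filter
      (fun p => (p.1, p.2.1) ∈ R ∧ (p.2.1, p.2.2) ∈ S ∧ (p.1, p.2.2) ∈ T) with hQ
  have hset : {p : D × D × D | (p.1, p.2.1) ∈ R ∧ (p.2.1, p.2.2) ∈ S ∧ (p.1, p.2.2) ∈ T}
      = (Q : Set (D × D × D)) := by
    ext p
    simp only [Set.mem_setOf_eq, hQ, Finset.coe_filter, Finset.mem_product,
      Set.mem_setOf_eq]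
    constructor
    · rintro ⟨h1, h2, h3⟩
      refine ⟨⟨?_, ?_, ?_⟩, h1, h2, h3⟩
      · exact Finset.mem_image.2 ⟨_, h1, rfl⟩
      · exact Finset.mem_image.2 ⟨_, h1, rfl⟩
      · exact Finset.mem_image.2 ⟨_, h2, rfl⟩
    · rintro ⟨_, h⟩; exact h
  rw [hset, Set.ncard_coe_finset]
  -- fiberwise counting over b ∈ B
  have hfib : Q.card = ∑ b ∈ B, (Q.filter (fun p => p.2.1 = b)).card := by
    apply Finset.card_eq_sum_card_fiberwise
    intro p hp
    simp only [Finset.mem_coe, hQ, Finset.mem_filter, Finset.mem_product] at hp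
    exact hp.1.2.1
  -- degree counts
  set r : D → ℕ := fun b => (R.filter (fun x => x.2 = b)).card with hr
  set s : D → ℕ := fun b => (S.filter (fun x => x.1 = b)).card with hs
  have hRsum : ∑ b ∈ B, r b = R.card :=
    (Finset.card_eq_sum_card_fiberwise (f := Prod.snd) (s := R) (t := B)
      (fun x hx => Finset.mem_image.2 ⟨_, hx, rfl⟩)).symm
  have hSsum : ∑ b ∈ B, s b ≤ S.card := by
    have := Finset.card_eq_sum_card_fiberwise (f := Prod.fst)
      (s := S.filter (fun x => x.1 ∈ B)) (t := B)
      (fun x hx => (Finset.mem_filter.1 hx).2)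
    have hle : ∑ b ∈ B, s b ≤ ∑ b ∈ B, ((S.filter (fun x => x.1 ∈ B)).filter
        (fun x => x.1 = b)).card := by
      apply Finset.sum_le_sum
      intro b hb
      apply Finset.card_le_card
      intro x hx
      simp only [Finset.mem_filter] at hx ⊢
      exact ⟨⟨hx.1, hx.2 ▸ hb⟩, hx.2⟩
    calc ∑ b ∈ B, s b ≤ _ := hle
      _ = (S.filter (fun x => x.1 ∈ B)).card := this.symm
      _ ≤ S.card := Finset.card_filter_le _ _
  -- fiber bounds
  have hfib1 : ∀ b, (Q.filter (fun p => p.2.1 = b)).card ≤ r b * s b := by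
    intro b
    have : (Q.filter (fun p => p.2.1 = b)).card ≤
        ((R.filter (fun x => x.2 = b)) ×ˢ (S.filter (fun x => x.1 = b))).card := by
      apply Finset.card_le_card_of_injOn
        (fun p => ((p.1, p.2.1), (p.2.1, p.2.2)))
      · intro p hp
        simp only [Finset.mem_coe, hQ, Finset.mem_filter, Finset.mem_product] at hp ⊢
        exact ⟨⟨hp.1.2.1, hp.2⟩, hp.1.2.2.1, hp.2⟩
      · intro p _ q _ h
        simp only [Prod.mk.injEq] at h
        exact Prod.ext h.1.1 (Prod.ext h.1.2 h.2.2)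
    simpa [Finset.card_product] using this
  have hfib2 : ∀ b, (Q.filter (fun p => p.2.1 = b)).card ≤ N := by
    intro b
    have : (Q.filter (fun p => p.2.1 = b)).card ≤ T.card := by
      apply Finset.card_le_card_of_injOn (fun p => (p.1, p.2.2))
      · intro p hp
        have := (Finset.mem_filter.1 hp).1
        simp only [hQ, Finset.mem_filter] at this
        tauto
      · intro p hp q hq h
        have hp2 := (Finset.mem_filter.1 hp).2
        have hq2 := (Finset.mem_filter.1 hq).2
        simp only [Prod.mk.injEq] at h
        exact Prod.ext h.1 (Prod.ext (hp2.trans hq2.symm) h.2)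
    exact this.trans hT
  -- pass to reals
  have key : (Q.card : ℝ) ≤ ∑ b ∈ B, Real.sqrt (r b) * Real.sqrt (s b) * Real.sqrt N := by
    rw [hfib]
    push_cast
    apply Finset.sum_le_sum
    intro b _
    set q := (Q.filter (fun p => p.2.1 = b)).card
    have h1 : (q : ℝ) ≤ (r b : ℝ) * (s b : ℝ) := by exact_mod_cast hfib1 b
    have h2 : (q : ℝ) ≤ (N : ℝ) := by exact_mod_cast hfib2 b
    have hq0 : (0 : ℝ) ≤ q := Nat.cast_nonneg _
    have : (q : ℝ) ≤ Real.sqrt ((r b : ℝ) * (s b : ℝ) * N) := by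
      rw [show (q : ℝ) = Real.sqrt (q * q) by
        rw [Real.sqrt_mul_self hq0]]
      apply Real.sqrt_le_sqrt
      exact mul_le_mul h1 h2 hq0 (by positivity)
    calc (q : ℝ) ≤ _ := this
      _ = Real.sqrt (r b) * Real.sqrt (s b) * Real.sqrt N := by
        rw [Real.sqrt_mul (by positivity), Real.sqrt_mul (by positivity)]
  have cs : ∑ b ∈ B, Real.sqrt (r b) * Real.sqrt (s b)
      ≤ Real.sqrt (R.card) * Real.sqrt (S.card) := by
    have h2 := Finset.sum_mul_sq_le_sq_mul_sq B (fun b => Real.sqrt (r b))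
      (fun b => Real.sqrt (s b))
    have hrsq : ∑ b ∈ B, Real.sqrt (r b) ^ 2 = (R.card : ℝ) := by
      rw [← hRsum]
      push_cast
      exact Finset.sum_congr rfl fun b _ => Real.sq_sqrt (Nat.cast_nonneg _)
    have hssq : ∑ b ∈ B, Real.sqrt (s b) ^ 2 ≤ (S.card : ℝ) := by
      have : ∑ b ∈ B, Real.sqrt (s b) ^ 2 = ((∑ b ∈ B, s b : ℕ) : ℝ) := by
        push_cast
        exact Finset.sum_congr rfl fun b _ => Real.sq_sqrt (Nat.cast_nonneg _)
      rw [this]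
      exact_mod_cast hSsum
    have hsum0 : (0 : ℝ) ≤ ∑ b ∈ B, Real.sqrt (r b) * Real.sqrt (s b) :=
      Finset.sum_nonneg fun b _ => by positivity
    have := h2.trans (mul_le_mul_of_nonneg_left hssq
      (by rw [hrsq]; exact Nat.cast_nonneg _))
    rw [hrsq] at this
    have hfin : (∑ b ∈ B, Real.sqrt (r b) * Real.sqrt (s b)) ^ 2
        ≤ (Real.sqrt R.card * Real.sqrt S.card) ^ 2 := by
      rw [mul_pow, Real.sq_sqrt (Nat.cast_nonneg _), Real.sq_sqrt (Nat.cast_nonneg _)]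
      exact this
    have := Real.sqrt_le_sqrt hfin
    rwa [Real.sqrt_sq hsum0, Real.sqrt_sq (by positivity)] at this
  -- combine
  have hfinal : (Q.card : ℝ) ≤ Real.sqrt N * Real.sqrt N * Real.sqrt N := by
    calc (Q.card : ℝ) ≤ ∑ b ∈ B, Real.sqrt (r b) * Real.sqrt (s b) * Real.sqrt N := key
      _ = (∑ b ∈ B, Real.sqrt (r b) * Real.sqrt (s b)) * Real.sqrt N := by
          rw [Finset.sum_mul]
      _ ≤ Real.sqrt R.card * Real.sqrt S.card * Real.sqrt N := by
          apply mul_le_mul_of_nonneg_right cs (Real.sqrt_nonneg _)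
      _ ≤ Real.sqrt N * Real.sqrt N * Real.sqrt N := by
          gcongr
  have hpow : Real.sqrt N * Real.sqrt N * Real.sqrt N = (N : ℝ) ^ ((3 : ℝ) / 2) := by
    rw [Real.sqrt_eq_rpow, ← Real.rpow_add' (Nat.cast_nonneg _) (by norm_num),
      ← Real.rpow_add' (Nat.cast_nonneg _) (by norm_num)]
    norm_num
  linarith [hfinal]
end

section
/- The recursive Leapfrog Triejoin algorithm is correct: for any join query Q over attributes A_1, ..., A_n, LFTJ(Q) as defined returns exactly the set of output tuples of Q. -/
/-- A join query over attributes `Fin n`: a list of atoms, each with a set of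
variables and a relation given as a set of full tuples (which, for a genuine
join query, depends only on the atom's variables). -/
abbrev JoinQuery (D : Type) (n : ℕ) := List (Set (Fin n) × Set (Fin n → D))

/-- The output of a join query: tuples whose projection to `vars R` lies in `R`
for every atom `R` (with relations encoded as var-determined sets of full tuples,
this is just membership in every relation). -/
def joinOutput {D : Type} {n : ℕ} (Q : JoinQuery D n) : Set (Fin n → D) :=
  {t | ∀ a ∈ Q, t ∈ a.2}

/-- The residual query `Q_{a₁}` on attributes `A₂, …, A_n` obtained by fixing the
first attribute to `a₁`: each relation containing `A₁` is replaced by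
`R[a₁] = π_{vars(R)∖{A₁}}(σ_{A₁ = a₁}(R))`, and the remaining relations are
unchanged (both cases are captured by substituting `a₁` for the first coordinate,
since relations depend only on their variables). -/
def residualQuery {D : Type} {n : ℕ} (Q : JoinQuery D (n + 1)) (a₁ : D) : JoinQuery D n :=
  Q.map (fun p => ({i : Fin n | i.succ ∈ p.1}, {s : Fin n → D | Fin.cons a₁ s ∈ p.2}))

/-- The recursive Leapfrog Triejoin: compute
`L = ⋂_{R : A₁ ∈ vars R} π_{A₁}(R)`, and for each `a₁ ∈ L` recursively solve the
residual query, returning `⋃_{a₁ ∈ L} {a₁} × LFTJ(Q_{a₁})`. -/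
def lftj {D : Type} : (n : ℕ) → JoinQuery D n → Set (Fin n → D)
  | 0, Q => {t | ∀ a ∈ Q, t ∈ a.2}
  | n + 1, Q =>
      {t | (t 0 ∈ {x : D | ∀ a ∈ Q, (0 : Fin (n + 1)) ∈ a.1 → ∃ u ∈ a.2, u 0 = x}) ∧
           Fin.tail t ∈ lftj n (residualQuery Q (t 0))}

/-- **Correctness of Leapfrog Triejoin**: for any join query `Q` (relations
depend only on their variables), `LFTJ(Q)` returns exactly the output of `Q`. -/
theorem lftj_correct {D : Type} (n : ℕ) (Q : JoinQuery D n)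
    (hvars : ∀ a ∈ Q, ∀ t t' : Fin n → D,
      (∀ i ∈ a.1, t i = t' i) → (t ∈ a.2 ↔ t' ∈ a.2)) :
    lftj n Q = joinOutput Q := by
  induction n with
  | zero => rfl
  | succ n ih =>
    ext t
    have key : Fin.tail t ∈ lftj n (residualQuery Q (t 0)) ↔
        ∀ a ∈ Q, t ∈ a.2 := by
      rw [ih (residualQuery Q (t 0)) ?_]
      · constructor
        · intro h a ha
          have := h _ (List.mem_map_of_mem ha)
          simpa [Fin.cons_self_tail] using this
        · intro h a ha
          rcases List.mem_map.1 ha with ⟨p, hp, rfl⟩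
          simpa [joinOutput, Fin.cons_self_tail] using h p hp
      · intro a ha s s' hss
        rcases List.mem_map.1 ha with ⟨p, hp, rfl⟩
        refine hvars p hp _ _ ?_
        intro i
        refine Fin.cases ?_ ?_ i
        · intro _; simp
        · intro j hj
          simpa using hss j hj
    constructor
    · intro ⟨_, h2⟩
      exact (key.1 h2)
    · intro h
      refine ⟨fun a ha _ => ⟨t, h a ha, rfl⟩, key.2 h⟩
end
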